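/- Let f(x) = α·erfc(√(β/x)) + ζ·erfc(3√(β/x)) with α, β > 0 and ζ ≥ 0. Then f is convex on the interval (0, 2β/3). Consequently, for positive reals x1,…,xM in (0, 2β/3), (1/M) Σ_i f(x_i) ≥ f((1/M) Σ_i x_i), with equality when all x_i are equal. -/

import Mathlib

open MeasureTheory

open Set in
lemma gauss_integrable : Integrable (fun z : ℝ => Real.exp (-z ^ 2)) := by
  have := integrable_exp_neg_mul_sq (one_pos)
  simpa [neg_mul] using this

lemma hasDerivAt_tail (t : ℝ) :
    HasDerivAt (fun u : ℝ => ∫ z in Set.Ioi u, Real.exp (-z ^ 2)) (-Real.exp (-t ^ 2)) t := by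
  have hint := gauss_integrable
  have hc : Continuous fun z : ℝ => Real.exp (-z ^ 2) := by continuity
  have key : ∀ u : ℝ, ∫ z in Set.Ioi u, Real.exp (-z ^ 2) =
      ((∫ z, Real.exp (-z ^ 2)) - ∫ z in Set.Iic (0:ℝ), Real.exp (-z ^ 2))
        - ∫ z in (0:ℝ)..u, Real.exp (-z ^ 2) := by
    intro u
    have h1 := intervalIntegral.integral_Iic_add_Ioi (μ := volume) (b := u)
      hint.integrableOn hint.integrableOn
    have h2 := intervalIntegral.integral_Iic_sub_Iic (μ := volume) (a := (0:ℝ)) (b := u)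
      hint.integrableOn hint.integrableOn
    linarith
  have hd : HasDerivAt (fun u : ℝ => ∫ z in (0:ℝ)..u, Real.exp (-z ^ 2))
      (Real.exp (-t ^ 2)) t :=
    intervalIntegral.integral_hasDerivAt_right hint.intervalIntegrable
      (hc.aestronglyMeasurable.stronglyMeasurableAtFilter)
      hc.continuousAt
  have := (hasDerivAt_const t ((∫ z, Real.exp (-z ^ 2)) - ∫ z in Set.Iic (0:ℝ), Real.exp (-z ^ 2))).sub hd
  rw [show (fun u : ℝ => ∫ z in Set.Ioi u, Real.exp (-z ^ 2)) = _ from funext key]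
  exact this.congr_deriv (by simp)

noncomputable def Dd (c β x : ℝ) : ℝ :=
  c * Real.sqrt β / Real.sqrt Real.pi * Real.exp (-(c ^ 2 * β) / x) / (x * Real.sqrt x)

noncomputable def Ee (c β x : ℝ) : ℝ :=
  c * Real.sqrt β / Real.sqrt Real.pi * Real.exp (-(c ^ 2 * β) / x) *
    (c ^ 2 * β / x - 3 / 2) / (x ^ 2 * Real.sqrt x)

lemma lemB {c β x : ℝ} (hc : 0 < c) (hβ : 0 < β) (hx : 0 < x) :
    HasDerivAt (fun s : ℝ =>
      2 / Real.sqrt Real.pi * ∫ z in Set.Ioi (c * Real.sqrt (β / s)), Real.exp (-z ^ 2))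
      (Dd c β x) x := by
  have hxne : x ≠ 0 := hx.ne'
  have hbx : (0:ℝ) < β / x := div_pos hβ hx
  -- inner function u s = c * sqrt (β / s)
  have hdiv : HasDerivAt (fun s : ℝ => β / s) (-(β / x ^ 2)) x := by
    simpa [div_eq_mul_inv, mul_comm, mul_assoc, neg_mul, mul_neg] using
      ((hasDerivAt_inv hxne).const_mul β)
  have hsq : HasDerivAt (fun s : ℝ => Real.sqrt (β / s))
      (1 / (2 * Real.sqrt (β / x)) * -(β / x ^ 2)) x :=
    (Real.hasDerivAt_sqrt hbx.ne').comp x hdiv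
  have hu : HasDerivAt (fun s : ℝ => c * Real.sqrt (β / s))
      (c * (1 / (2 * Real.sqrt (β / x)) * -(β / x ^ 2))) x := hsq.const_mul c
  -- outer
  have hout := (hasDerivAt_tail (c * Real.sqrt (β / x))).const_mul (2 / Real.sqrt Real.pi)
  have hcomp := hout.comp x hu
  have hval : (c * Real.sqrt (β / x)) ^ 2 = c ^ 2 * β / x := by
    rw [mul_pow, Real.sq_sqrt hbx.le, mul_div_assoc]
  rw [hval] at hcomp
  refine hcomp.congr_deriv ?_
  symm
  unfold Dd
  have h1 : Real.sqrt (β / x) = Real.sqrt β / Real.sqrt x := Real.sqrt_div hβ.le x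
  have hsx : (0:ℝ) < Real.sqrt x := Real.sqrt_pos.mpr hx
  have hsb : (0:ℝ) < Real.sqrt β := Real.sqrt_pos.mpr hβ
  have hmul : Real.sqrt x * Real.sqrt x = x := Real.mul_self_sqrt hx.le
  rw [h1]
  field_simp
  ring_nf
  rw [Real.sq_sqrt hβ.le, Real.sq_sqrt hx.le]

lemma lemC {c β x : ℝ} (hβ : 0 < β) (hx : 0 < x) :
    HasDerivAt (Dd c β) (Ee c β x) x := by
  have hxne : x ≠ 0 := hx.ne'
  have hsx : (0:ℝ) < Real.sqrt x := Real.sqrt_pos.mpr hx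
  set a := c ^ 2 * β with ha
  have hda : HasDerivAt (fun s : ℝ => -a / s) (a / x ^ 2) x := by
    simpa [div_eq_mul_inv, neg_mul, mul_comm, mul_assoc] using
      ((hasDerivAt_inv hxne).const_mul (-a))
  have hexp : HasDerivAt (fun s : ℝ => Real.exp (-a / s))
      (Real.exp (-a / x) * (a / x ^ 2)) x := hda.exp
  have hnum : HasDerivAt (fun s : ℝ => c * Real.sqrt β / Real.sqrt Real.pi * Real.exp (-a / s))
      (c * Real.sqrt β / Real.sqrt Real.pi * (Real.exp (-a / x) * (a / x ^ 2))) x :=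
    hexp.const_mul _
  have hden : HasDerivAt (fun s : ℝ => s * Real.sqrt s)
      (1 * Real.sqrt x + x * (1 / (2 * Real.sqrt x))) x :=
    (hasDerivAt_id x).mul (Real.hasDerivAt_sqrt hxne)
  have hdne : x * Real.sqrt x ≠ 0 := by positivity
  have h := hnum.div hden hdne
  have heq : (fun s : ℝ => c * Real.sqrt β / Real.sqrt Real.pi * Real.exp (-a / s) / (s * Real.sqrt s))
      = Dd c β := by
    funext s
    simp [Dd, ha, neg_div]
  rw [← heq]
  refine h.congr_deriv ?_
  symm
  unfold Ee
  rw [← ha]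
  rw [show (-a / x) = (-(a)/x) by ring]
  field_simp
  ring_nf
  rw [Real.sq_sqrt hx.le]
  ring

lemma Ee_nonneg {c β x : ℝ} (hc : 1 ≤ c) (hβ : 0 < β) (hx : 0 < x) (hx2 : x < 2 * β / 3) :
    0 ≤ Ee c β x := by
  unfold Ee
  have h1 : (3:ℝ) / 2 < β / x := by rw [lt_div_iff₀ hx]; linarith
  have h2 : β / x ≤ c ^ 2 * β / x := by
    gcongr
    nlinarith [mul_nonneg (mul_nonneg (sub_nonneg.2 hc) (by linarith : (0:ℝ) ≤ c + 1)) hβ.le]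
  apply div_nonneg
  · apply mul_nonneg
    · positivity
    · linarith
  · positivity

theorem stmt15_aux (α β ζ : ℝ) (hα : 0 < α) (hβ : 0 < β) (hζ : 0 ≤ ζ)
    (M : ℕ) (hM : 0 < M) (x : Fin M → ℝ)
    (hx : ∀ i, x i ∈ Set.Ioo 0 (2 * β / 3))
    (erfc : ℝ → ℝ)
    (herfc : ∀ t, erfc t = (2 / Real.sqrt Real.pi) * ∫ z in Set.Ioi t, Real.exp (-z ^ 2))
    (f : ℝ → ℝ)
    (hf : ∀ s, f s = α * erfc (Real.sqrt (β / s)) + ζ * erfc (3 * Real.sqrt (β / s))) :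
    ConvexOn ℝ (Set.Ioo 0 (2 * β / 3)) f ∧
    (1 / M : ℝ) * ∑ i, f (x i) ≥ f ((1 / M : ℝ) * ∑ i, x i) ∧
    ((∀ i j, x i = x j) →
      (1 / M : ℝ) * ∑ i, f (x i) = f ((1 / M : ℝ) * ∑ i, x i)) := by
  have hb23 : (0:ℝ) < 2 * β / 3 := by positivity
  -- f has first and second derivative on positive reals
  have hder : ∀ y : ℝ, 0 < y →
      HasDerivAt f (α * Dd 1 β y + ζ * Dd 3 β y) y := by
    intro y hy
    have h1 := (lemB (c := 1) one_pos hβ hy).const_mul α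
    have h3 := (lemB (c := 3) (by norm_num) hβ hy).const_mul ζ
    have h := h1.add h3
    have heq : (fun s : ℝ =>
        α * (2 / Real.sqrt Real.pi * ∫ z in Set.Ioi ((1:ℝ) * Real.sqrt (β / s)), Real.exp (-z ^ 2)) +
        ζ * (2 / Real.sqrt Real.pi * ∫ z in Set.Ioi ((3:ℝ) * Real.sqrt (β / s)), Real.exp (-z ^ 2)))
        = f := by
      funext s
      rw [hf s, herfc, herfc, one_mul]
    rw [← heq]; exact h
  have hder2 : ∀ y : ℝ, 0 < y →
      HasDerivAt (fun t => α * Dd 1 β t + ζ * Dd 3 β t)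
        (α * Ee 1 β y + ζ * Ee 3 β y) y := by
    intro y hy
    exact ((lemC hβ hy).const_mul α).add ((lemC hβ hy).const_mul ζ)
  have hconv : ConvexOn ℝ (Set.Ioo 0 (2 * β / 3)) f := by
    refine convexOn_of_hasDerivWithinAt2_nonneg
      (f' := fun t => α * Dd 1 β t + ζ * Dd 3 β t)
      (f'' := fun t => α * Ee 1 β t + ζ * Ee 3 β t)
      (convex_Ioo _ _) ?_ ?_ ?_ ?_
    · intro y hy
      exact ((hder y hy.1).continuousAt).continuousWithinAt
    · intro y hy
      rw [isOpen_Ioo.interior_eq] at hy ⊢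
      exact (hder y hy.1).hasDerivWithinAt
    · intro y hy
      rw [isOpen_Ioo.interior_eq] at hy ⊢
      exact (hder2 y hy.1).hasDerivWithinAt
    · intro y hy
      rw [isOpen_Ioo.interior_eq] at hy
      have e1 : 0 ≤ Ee 1 β y := Ee_nonneg le_rfl hβ hy.1 hy.2
      have e3 : 0 ≤ Ee 3 β y := Ee_nonneg (by norm_num) hβ hy.1 hy.2
      positivity
  have hMne : (M : ℝ) ≠ 0 := Nat.cast_ne_zero.mpr hM.ne'
  refine ⟨hconv, ?_, ?_⟩
  · have key := hconv.map_sum_le (t := Finset.univ) (w := fun _ : Fin M => (1 / M : ℝ))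
      (p := x) (fun i _ => by positivity)
      (by simp [Finset.sum_const, Finset.card_univ]; field_simp)
      (fun i _ => hx i)
    have hs1 : ∑ i : Fin M, (1 / M : ℝ) • x i = (1 / M : ℝ) * ∑ i, x i := by
      simp [Finset.mul_sum, smul_eq_mul]
    have hs2 : ∑ i : Fin M, (1 / M : ℝ) • f (x i) = (1 / M : ℝ) * ∑ i, f (x i) := by
      simp [Finset.mul_sum, smul_eq_mul]
    rw [hs1, hs2] at key
    exact key
  · intro heq
    have : Nonempty (Fin M) := ⟨⟨0, hM⟩⟩
    set i0 : Fin M := Classical.arbitrary (Fin M)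
    have h1 : ∑ i, x i = (M : ℝ) * x i0 := by
      rw [Finset.sum_congr rfl fun i _ => heq i i0]
      simp [Finset.sum_const, Finset.card_univ, mul_comm]
    have h2 : ∑ i, f (x i) = (M : ℝ) * f (x i0) := by
      rw [Finset.sum_congr rfl fun i _ => congrArg f (heq i i0)]
      simp [Finset.sum_const, Finset.card_univ, mul_comm]
    rw [h1, h2]
    rw [show (1 / M : ℝ) * ((M : ℝ) * x i0) = x i0 by field_simp,
      show (1 / M : ℝ) * ((M : ℝ) * f (x i0)) = f (x i0) by field_simp]

/-- The BER function `f(x) = α erfc(√(β/x)) + ζ erfc(3√(β/x))` is convex on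
`(0, 2β/3)`, so by Jensen's inequality the average BER is bounded below by the
BER at the average MSE, with equality when all the `x_i` are equal. -/
theorem stmt15 (α β ζ : ℝ) (hα : 0 < α) (hβ : 0 < β) (hζ : 0 ≤ ζ)
    (M : ℕ) (hM : 0 < M) (x : Fin M → ℝ)
    (hx : ∀ i, x i ∈ Set.Ioo 0 (2 * β / 3))
    (erfc : ℝ → ℝ)
    (herfc : ∀ t, erfc t = (2 / Real.sqrt Real.pi) * ∫ z in Set.Ioi t, Real.exp (-z ^ 2))
    (f : ℝ → ℝ)
    (hf : ∀ s, f s = α * erfc (Real.sqrt (β / s)) + ζ * erfc (3 * Real.sqrt (β / s))) :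
    ConvexOn ℝ (Set.Ioo 0 (2 * β / 3)) f ∧
    (1 / M : ℝ) * ∑ i, f (x i) ≥ f ((1 / M : ℝ) * ∑ i, x i) ∧
    ((∀ i j, x i = x j) →
      (1 / M : ℝ) * ∑ i, f (x i) = f ((1 / M : ℝ) * ∑ i, x i)) := by
  exact stmt15_aux α β ζ hα hβ hζ M hM x hx erfc herfc f hf
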